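/- Let 𝒜 be an associative ℂ-algebra generated by a subspace 𝒱 ⊆ 𝒜, and suppose the map v ↦ -v on 𝒱 extends to an algebra anti-automorphism S of 𝒜. Let f₀ : 𝒜 → ℬ₀ and f₁ : 𝒜 → ℬ₁ be algebra homomorphisms with f₁ surjective, and let ℐ = ker f₁. Define f₂ : 𝒱 → ℬ₀ ⊗ ℬ₁ by f₂(v) = f₀(v) ⊗ 1 + 1 ⊗ f₁(v). Then the linear map ℬ₀ → ℬ₀ ⊗ ℬ₁, b ↦ b ⊗ 1, induces a vector space isomorphism ℬ₀/(ℬ₀ · f₀(S(ℐ))) ≅ (ℬ₀ ⊗ ℬ₁)/((ℬ₀ ⊗ ℬ₁) · f₂(𝒱)). -/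

import Mathlib

open TensorProduct

/-- Let `𝒜` be a ℂ-algebra generated by a subspace `𝒱`, `S` an algebra
anti-automorphism of `𝒜` with `S v = -v` for `v ∈ 𝒱`, `f₀ : 𝒜 → ℬ₀`, `f₁ : 𝒜 → ℬ₁`
algebra maps with `f₁` surjective, `ℐ = ker f₁`.  Then `b ↦ b ⊗ 1` induces a linear
isomorphism `ℬ₀/(ℬ₀ · f₀(S(ℐ))) ≅ (ℬ₀ ⊗ ℬ₁)/((ℬ₀ ⊗ ℬ₁) · f₂(𝒱))`, where
`f₂(v) = f₀(v) ⊗ 1 + 1 ⊗ f₁(v)`. -/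
theorem stmt3 (A B0 B1 : Type*) [Ring A] [Algebra ℂ A] [Ring B0] [Algebra ℂ B0]
    [Ring B1] [Algebra ℂ B1]
    (𝒱 : Submodule ℂ A) (hgen : Algebra.adjoin ℂ (𝒱 : Set A) = ⊤)
    (S : A →ₗ[ℂ] A) (hSbij : Function.Bijective S) (hS1 : S 1 = 1)
    (hSmul : ∀ a b : A, S (a * b) = S b * S a)
    (hSV : ∀ v ∈ 𝒱, S v = -v)
    (f0 : A →ₐ[ℂ] B0) (f1 : A →ₐ[ℂ] B1) (hf1 : Function.Surjective f1) :
    ∃ g : (B0 ⧸ (Submodule.span B0 (⇑f0 '' (⇑S '' {a : A | f1 a = 0}))).restrictScalars ℂ)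
        ≃ₗ[ℂ]
        ((B0 ⊗[ℂ] B1) ⧸ (Submodule.span (B0 ⊗[ℂ] B1)
          {t : B0 ⊗[ℂ] B1 | ∃ v ∈ 𝒱,
            t = f0 v ⊗ₜ[ℂ] (1 : B1) + (1 : B0) ⊗ₜ[ℂ] f1 v}).restrictScalars ℂ),
      ∀ b : B0, g (Submodule.Quotient.mk b) = Submodule.Quotient.mk (b ⊗ₜ[ℂ] (1 : B1)) := by
  set sJ : Set B0 := ⇑f0 '' (⇑S '' {a : A | f1 a = 0}) with hsJ
  set J : Submodule ℂ B0 := (Submodule.span B0 sJ).restrictScalars ℂ with hJ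
  set sN : Set (B0 ⊗[ℂ] B1) :=
    {t : B0 ⊗[ℂ] B1 | ∃ v ∈ 𝒱, t = f0 v ⊗ₜ[ℂ] (1 : B1) + (1 : B0) ⊗ₜ[ℂ] f1 v} with hsN
  set N : Submodule ℂ (B0 ⊗[ℂ] B1) := (Submodule.span (B0 ⊗[ℂ] B1) sN).restrictScalars ℂ
    with hN
  -- the map `ψ : a ↦ (b₀ ↦ [b₀ * f₀ (S a)])`
  let ψ : A →ₗ[ℂ] B0 →ₗ[ℂ] (B0 ⧸ J) :=
    ((LinearMap.llcomp ℂ B0 B0 (B0 ⧸ J) J.mkQ) ∘ₗ (LinearMap.mul ℂ B0).flip) ∘ₗ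
      (f0.toLinearMap ∘ₗ S)
  have hψ : ∀ (a : A) (b : B0), ψ a b = Submodule.Quotient.mk (b * f0 (S a)) := fun _ _ => rfl
  have hker : LinearMap.ker f1.toLinearMap ≤ LinearMap.ker ψ := by
    intro a ha
    have ha' : f1 a = 0 := ha
    ext b
    rw [hψ]
    simp only [LinearMap.zero_apply]
    rw [Submodule.Quotient.mk_eq_zero]
    have hmem : f0 (S a) ∈ sJ := ⟨S a, ⟨a, ha', rfl⟩, rfl⟩
    have : b • f0 (S a) ∈ Submodule.span B0 sJ :=
      Submodule.smul_mem _ b (Submodule.subset_span hmem)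
    exact this
  let e := f1.toLinearMap.quotKerEquivOfSurjective hf1
  let ψbar : B1 →ₗ[ℂ] B0 →ₗ[ℂ] (B0 ⧸ J) :=
    ((LinearMap.ker f1.toLinearMap).liftQ ψ hker) ∘ₗ (e.symm : B1 →ₗ[ℂ] _)
  have hψbar : ∀ a : A, ψbar (f1 a) = ψ a := by
    intro a
    have h1 : e (Submodule.Quotient.mk a) = f1 a := rfl
    have h2 : e.symm (f1 a) = Submodule.Quotient.mk a := by
      apply e.injective; rw [LinearEquiv.apply_symm_apply, h1]
    show ((LinearMap.ker f1.toLinearMap).liftQ ψ hker) (e.symm (f1 a)) = ψ a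
    rw [h2, Submodule.liftQ_apply]
  let q : B0 ⊗[ℂ] B1 →ₗ[ℂ] (B0 ⧸ J) := TensorProduct.lift ψbar.flip
  have hq : ∀ (b0 : B0) (b1 : B1), q (b0 ⊗ₜ[ℂ] b1) = ψbar b1 b0 := fun _ _ => rfl
  -- key claim
  have hkey : ∀ a : A, ∀ x : B0 ⊗[ℂ] B1,
      x * (f0 (S a) ⊗ₜ[ℂ] (1 : B1)) - x * ((1 : B0) ⊗ₜ[ℂ] f1 a) ∈
        Submodule.span (B0 ⊗[ℂ] B1) sN := by
    intro a
    have ha : a ∈ Algebra.adjoin ℂ (𝒱 : Set A) := hgen ▸ Algebra.mem_top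
    refine Algebra.adjoin_induction (fun v hv x => ?_) (fun r x => ?_)
      (fun a b _ _ iha ihb x => ?_) (fun a b _ _ iha ihb x => ?_) ha
    · -- generators
      have hSv : S v = -v := hSV v hv
      have hmem : f0 v ⊗ₜ[ℂ] (1 : B1) + (1 : B0) ⊗ₜ[ℂ] f1 v ∈
          Submodule.span (B0 ⊗[ℂ] B1) sN := Submodule.subset_span ⟨v, hv, rfl⟩
      have h2 : x * (f0 (S v) ⊗ₜ[ℂ] (1 : B1)) - x * ((1 : B0) ⊗ₜ[ℂ] f1 v) =
          -(x • (f0 v ⊗ₜ[ℂ] (1 : B1) + (1 : B0) ⊗ₜ[ℂ] f1 v)) := by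
        rw [hSv, map_neg, neg_tmul, smul_eq_mul, mul_add, mul_neg]
        abel
      rw [h2]
      exact neg_mem (Submodule.smul_mem _ x hmem)
    · -- algebraMap
      have hS : S (algebraMap ℂ A r) = algebraMap ℂ A r := by
        rw [Algebra.algebraMap_eq_smul_one, map_smul, hS1]
      have h0 : f0 (S (algebraMap ℂ A r)) ⊗ₜ[ℂ] (1 : B1) =
          (1 : B0) ⊗ₜ[ℂ] f1 (algebraMap ℂ A r) := by
        rw [hS, AlgHom.commutes, AlgHom.commutes, Algebra.algebraMap_eq_smul_one,
          Algebra.algebraMap_eq_smul_one, smul_tmul]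
      rw [h0, sub_self]
      exact Submodule.zero_mem _
    · -- add
      have h0 : x * (f0 (S (a + b)) ⊗ₜ[ℂ] (1 : B1)) - x * ((1 : B0) ⊗ₜ[ℂ] f1 (a + b)) =
          (x * (f0 (S a) ⊗ₜ[ℂ] (1 : B1)) - x * ((1 : B0) ⊗ₜ[ℂ] f1 a)) +
          (x * (f0 (S b) ⊗ₜ[ℂ] (1 : B1)) - x * ((1 : B0) ⊗ₜ[ℂ] f1 b)) := by
        rw [map_add, map_add, map_add, add_tmul, tmul_add, mul_add, mul_add]
        abel
      rw [h0]
      exact add_mem (iha x) (ihb x)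
    · -- mul
      have hcross : (x * (f0 (S b) ⊗ₜ[ℂ] (1 : B1))) * ((1 : B0) ⊗ₜ[ℂ] f1 a) =
          (x * ((1 : B0) ⊗ₜ[ℂ] f1 a)) * (f0 (S b) ⊗ₜ[ℂ] (1 : B1)) := by
        rw [mul_assoc, mul_assoc, Algebra.TensorProduct.tmul_mul_tmul,
          Algebra.TensorProduct.tmul_mul_tmul, mul_one, one_mul, mul_one, one_mul]
      have h1 := iha (x * (f0 (S b) ⊗ₜ[ℂ] (1 : B1)))
      have h2 := ihb (x * ((1 : B0) ⊗ₜ[ℂ] f1 a))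
      have hsum := add_mem h1 h2
      have h0 : x * (f0 (S (a * b)) ⊗ₜ[ℂ] (1 : B1)) - x * ((1 : B0) ⊗ₜ[ℂ] f1 (a * b)) =
          (x * (f0 (S b) ⊗ₜ[ℂ] (1 : B1)) * (f0 (S a) ⊗ₜ[ℂ] (1 : B1)) -
            x * (f0 (S b) ⊗ₜ[ℂ] (1 : B1)) * ((1 : B0) ⊗ₜ[ℂ] f1 a)) +
          (x * ((1 : B0) ⊗ₜ[ℂ] f1 a) * (f0 (S b) ⊗ₜ[ℂ] (1 : B1)) -
            x * ((1 : B0) ⊗ₜ[ℂ] f1 a) * ((1 : B0) ⊗ₜ[ℂ] f1 b)) := by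
        rw [hcross, sub_add_sub_cancel]
        congr 1
        · rw [hSmul, map_mul, mul_assoc]
          congr 1
          rw [Algebra.TensorProduct.tmul_mul_tmul, mul_one]
        · rw [mul_assoc]
          congr 1
          rw [Algebra.TensorProduct.tmul_mul_tmul, one_mul, map_mul]
      rw [h0]
      exact hsum
  -- the forward map `p : B0/J → (B0⊗B1)/N`, induced by `b ↦ b ⊗ 1`
  let β : B0 →ₗ[ℂ] ((B0 ⊗[ℂ] B1) ⧸ N) := N.mkQ ∘ₗ ((TensorProduct.mk ℂ B0 B1).flip 1)
  have hβ : ∀ b : B0, β b = Submodule.Quotient.mk (b ⊗ₜ[ℂ] (1 : B1)) := fun _ => rfl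
  have hJker : J ≤ LinearMap.ker β := by
    intro x hx
    have hx' : x ∈ Submodule.span B0 sJ := hx
    have main : ∀ y ∈ Submodule.span B0 sJ, ∀ b : B0,
        (b * y) ⊗ₜ[ℂ] (1 : B1) ∈ Submodule.span (B0 ⊗[ℂ] B1) sN := by
      intro y hy
      refine Submodule.span_induction (fun z hz b => ?_) (fun b => ?_)
        (fun z w _ _ ihz ihw b => ?_) (fun c z _ ihz b => ?_) hy
      · obtain ⟨sa, ⟨a, ha, rfl⟩, rfl⟩ := hz
        have hthis := hkey a (b ⊗ₜ[ℂ] (1 : B1))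
        have hfa : f1 a = 0 := ha
        rw [hfa] at hthis
        have heq : (b * f0 (S a)) ⊗ₜ[ℂ] (1 : B1) =
            b ⊗ₜ[ℂ] (1 : B1) * f0 (S a) ⊗ₜ[ℂ] (1 : B1) -
              b ⊗ₜ[ℂ] (1 : B1) * (1 : B0) ⊗ₜ[ℂ] (0 : B1) := by
          rw [Algebra.TensorProduct.tmul_mul_tmul, mul_one, tmul_zero, mul_zero, sub_zero]
        rw [heq]
        exact hthis
      · simp
      · have : b * (z + w) = b * z + b * w := mul_add _ _ _
        rw [this, add_tmul]
        exact add_mem (ihz b) (ihw b)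
      · rw [smul_eq_mul, ← mul_assoc]
        exact ihz (b * c)
    have := main x hx' 1
    rw [one_mul] at this
    show β x = 0
    rw [hβ, Submodule.Quotient.mk_eq_zero]
    exact this
  let p : (B0 ⧸ J) →ₗ[ℂ] ((B0 ⊗[ℂ] B1) ⧸ N) := J.liftQ β hJker
  -- the backward map
  have hNker : N ≤ LinearMap.ker q := by
    intro t ht
    have ht' : t ∈ Submodule.span (B0 ⊗[ℂ] B1) sN := ht
    have main : ∀ u ∈ Submodule.span (B0 ⊗[ℂ] B1) sN, ∀ r : B0 ⊗[ℂ] B1,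
        q (r * u) = 0 := by
      intro u hu
      refine Submodule.span_induction (fun z hz r => ?_) (fun r => ?_)
        (fun z w _ _ ihz ihw r => ?_) (fun c z _ ihz r => ?_) hu
      · obtain ⟨v, hv, rfl⟩ := hz
        induction r using TensorProduct.induction_on with
        | zero => simp
        | add r1 r2 ih1 ih2 => rw [add_mul, map_add, ih1, ih2, add_zero]
        | tmul b0 b1 =>
          obtain ⟨a, rfl⟩ := hf1 b1
          rw [mul_add, Algebra.TensorProduct.tmul_mul_tmul,
            Algebra.TensorProduct.tmul_mul_tmul]
          simp only [mul_one, one_mul]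
          rw [← map_mul, map_add, hq, hq, hψbar, hψbar, hψ, hψ]
          rw [hSmul, hSV v hv, map_mul, map_neg]
          rw [← Submodule.Quotient.mk_add]
          rw [Submodule.Quotient.mk_eq_zero]
          have hz : b0 * f0 v * f0 (S a) + b0 * (-f0 v * f0 (S a)) = 0 := by
            rw [neg_mul, mul_neg, mul_assoc]
            exact add_neg_cancel _
          rw [hz]
          exact Submodule.zero_mem _
      · rw [mul_zero, map_zero]
      · rw [mul_add, map_add, ihz, ihw, add_zero]
      · rw [smul_eq_mul, ← mul_assoc]
        exact ihz (r * c)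
    have := main t ht' 1
    rwa [one_mul] at this
  let qbar : ((B0 ⊗[ℂ] B1) ⧸ N) →ₗ[ℂ] (B0 ⧸ J) := N.liftQ q hNker
  -- mutual inverses
  have hpq : p ∘ₗ qbar = LinearMap.id := by
    apply Submodule.linearMap_qext
    apply TensorProduct.ext'
    intro b0 b1
    obtain ⟨a, rfl⟩ := hf1 b1
    show p (qbar (Submodule.Quotient.mk (b0 ⊗ₜ[ℂ] f1 a))) =
      Submodule.Quotient.mk (b0 ⊗ₜ[ℂ] f1 a)
    rw [Submodule.liftQ_apply, hq, hψbar, hψ, Submodule.liftQ_apply, hβ]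
    rw [Submodule.Quotient.eq]
    have hthis := hkey a (b0 ⊗ₜ[ℂ] (1 : B1))
    have heq : (b0 * f0 (S a)) ⊗ₜ[ℂ] (1 : B1) - b0 ⊗ₜ[ℂ] f1 a =
        b0 ⊗ₜ[ℂ] (1 : B1) * f0 (S a) ⊗ₜ[ℂ] (1 : B1) -
          b0 ⊗ₜ[ℂ] (1 : B1) * (1 : B0) ⊗ₜ[ℂ] f1 a := by
      rw [Algebra.TensorProduct.tmul_mul_tmul, Algebra.TensorProduct.tmul_mul_tmul,
        mul_one, mul_one, one_mul]
    rw [heq]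
    exact hthis
  have hqp : qbar ∘ₗ p = LinearMap.id := by
    apply Submodule.linearMap_qext
    ext b
    show qbar (p (Submodule.Quotient.mk b)) = Submodule.Quotient.mk b
    rw [Submodule.liftQ_apply, hβ, Submodule.liftQ_apply, hq]
    have h1 : (1 : B1) = f1 1 := (map_one f1).symm
    rw [h1, hψbar, hψ, hS1, map_one, mul_one]
  refine ⟨LinearEquiv.ofLinear p qbar hpq hqp, fun b => ?_⟩
  show p (Submodule.Quotient.mk b) = _
  rw [Submodule.liftQ_apply, hβ]
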